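/- The Equivariant Temporal Module (ETM) layer with forward attention is E(3)-equivariant: let T, N be positive integers, h : Fin N → Fin T → ℝᶜ be per-node, per-frame features, and φ_q, φ_k, φ_v : ℝᶜ → ℝᵈ, φ_x : ℝᵈ → ℝ be arbitrary functions. For each node i and frames t, s with s ≤ t, define the forward attention weights α_i(t,s) = exp(⟨φ_q(h_i(t)), φ_k(h_i(s))⟩) / Σ_{s'=0}^{t} exp(⟨φ_q(h_i(t)), φ_k(h_i(s'))⟩). For a trajectory y : Fin N → Fin T → ℝ³, define the updated features h'_i(t) = h_i(t) + Σ_{s=0}^{t} α_i(t,s) φ_v(h_i(s)) and updated positions y'_i(t) = y_i(t) + Σ_{s=0}^{t} α_i(t,s) · (y_i(t) - y_i(s)) · φ_x(φ_v(h_i(s))). Then for every real orthogonal 3×3 matrix O and every b ∈ ℝ³, applying the layer to the transformed trajectory (i,t) ↦ O·y_i(t) + b leaves h'_i(t) unchanged and produces output positions O·y'_i(t) + b for all i and t. -/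

import Mathlib

open scoped BigOperators

/-- The E(3) action `y ↦ O·y + b` on 3-vectors. -/
noncomputable def e3Act (O : Matrix (Fin 3) (Fin 3) ℝ) (b : EuclideanSpace ℝ (Fin 3))
    (v : EuclideanSpace ℝ (Fin 3)) : EuclideanSpace ℝ (Fin 3) :=
  (show EuclideanSpace ℝ (Fin 3) from WithLp.toLp 2 (O.mulVec v)) + b

/-- Forward attention weights
`α_i(t,s) = exp(⟨φ_q(h_i(t)), φ_k(h_i(s))⟩) / Σ_{s' ≤ t} exp(⟨φ_q(h_i(t)), φ_k(h_i(s'))⟩)`. -/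
noncomputable def etmAttn {T N c d : ℕ}
    (φq φk : (Fin c → ℝ) → (Fin d → ℝ))
    (h : Fin N → Fin T → (Fin c → ℝ)) (i : Fin N) (t s : Fin T) : ℝ :=
  Real.exp (∑ a, φq (h i t) a * φk (h i s) a) /
    ∑ s' ∈ Finset.Iic t, Real.exp (∑ a, φq (h i t) a * φk (h i s') a)

/-- ETM feature update `h'_i(t) = h_i(t) + Σ_{s ≤ t} α_i(t,s) φ_v(h_i(s))`
(computed from the features `h` only; the positions `y` enter trivially).
The value space coincides with the feature space so that the residual addition
is well defined. -/
noncomputable def etmFeat {T N c d : ℕ}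
    (φq φk : (Fin c → ℝ) → (Fin d → ℝ)) (φv : (Fin c → ℝ) → (Fin c → ℝ))
    (h : Fin N → Fin T → (Fin c → ℝ))
    (_y : Fin N → Fin T → EuclideanSpace ℝ (Fin 3))
    (i : Fin N) (t : Fin T) : Fin c → ℝ :=
  h i t + ∑ s ∈ Finset.Iic t, etmAttn φq φk h i t s • φv (h i s)

/-- ETM position update
`y'_i(t) = y_i(t) + Σ_{s ≤ t} α_i(t,s) · (y_i(t) - y_i(s)) · φ_x(φ_v(h_i(s)))`. -/
noncomputable def etmPos {T N c d : ℕ}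
    (φq φk : (Fin c → ℝ) → (Fin d → ℝ)) (φv : (Fin c → ℝ) → (Fin c → ℝ))
    (φx : (Fin c → ℝ) → ℝ)
    (h : Fin N → Fin T → (Fin c → ℝ))
    (y : Fin N → Fin T → EuclideanSpace ℝ (Fin 3))
    (i : Fin N) (t : Fin T) : EuclideanSpace ℝ (Fin 3) :=
  y i t + ∑ s ∈ Finset.Iic t,
    (etmAttn φq φk h i t s * φx (φv (h i s))) • (y i t - y i s)

/-- The Equivariant Temporal Module (ETM) layer with forward attention is
E(3)-equivariant: applying the layer to the transformed trajectory `(i,t) ↦ O·y_i(t) + b`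
leaves the updated features unchanged and transforms the updated positions by the same
`O, b`, for all nodes `i` and frames `t`. -/
theorem etm_E3_equivariant (T N c d : ℕ) (hT : 0 < T) (hN : 0 < N)
    (φq φk : (Fin c → ℝ) → (Fin d → ℝ)) (φv : (Fin c → ℝ) → (Fin c → ℝ))
    (φx : (Fin c → ℝ) → ℝ)
    (h : Fin N → Fin T → (Fin c → ℝ))
    (y : Fin N → Fin T → EuclideanSpace ℝ (Fin 3))
    (O : Matrix (Fin 3) (Fin 3) ℝ) (hO : O ∈ Matrix.orthogonalGroup (Fin 3) ℝ)
    (b : EuclideanSpace ℝ (Fin 3)) :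
    (∀ (i : Fin N) (t : Fin T),
        etmFeat φq φk φv h (fun j s => e3Act O b (y j s)) i t = etmFeat φq φk φv h y i t) ∧
      (∀ (i : Fin N) (t : Fin T),
        etmPos φq φk φv φx h (fun j s => e3Act O b (y j s)) i t =
          e3Act O b (etmPos φq φk φv φx h y i t)) := by
  constructor
  · intro i t; rfl
  · intro i t
    show _ = e3Act O b _
    unfold etmPos e3Act
    have key : ∀ u v : EuclideanSpace ℝ (Fin 3),
        ((show EuclideanSpace ℝ (Fin 3) from WithLp.toLp 2 (O.mulVec u)) + b)
          - ((show EuclideanSpace ℝ (Fin 3) from WithLp.toLp 2 (O.mulVec v)) + b)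
          = (show EuclideanSpace ℝ (Fin 3) from WithLp.toLp 2 (O.mulVec (u - v))) := by
      intro u v
      ext j
      simp [Matrix.mulVec, dotProduct, Pi.sub_apply, mul_sub, Finset.sum_sub_distrib]
    simp only [key]
    have e1 : ∀ v : EuclideanSpace ℝ (Fin 3), (WithLp.toLp 2 (O.mulVec v) : EuclideanSpace ℝ (Fin 3)) = Matrix.toEuclideanLin O v := fun _ => rfl
    simp only [e1, map_add, map_sum, map_smul]
    abel
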